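/- Let G be a profinite group such that for every natural number n, G has only finitely many open normal subgroups of index n. Let T : G → G be a surjective continuous group homomorphism. Then T is a quotient-preserving map; that is, for every neighborhood U of the identity there exists an open normal subgroup N of G with N ⊆ U and T(N) ⊆ N. -/

import Mathlib

theorem stmt12 {G : Type*} [Group G] [TopologicalSpace G] [IsTopologicalGroup G]
    [CompactSpace G] [T2Space G] [TotallyDisconnectedSpace G]
    (hfin : ∀ n : ℕ, {N : Subgroup G | N.Normal ∧ IsOpen (N : Set G) ∧ N.index = n}.Finite)
    (T : G →* G) (hc : Continuous T) (hs : Function.Surjective T) :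
    ∀ U ∈ nhds (1 : G), ∃ N : Subgroup G, N.Normal ∧ IsOpen (N : Set G) ∧
      (N : Set G) ⊆ U ∧ ⇑T '' (N : Set G) ⊆ (N : Set G) := by
  intro U hU
  obtain ⟨W, ⟨h1W, hW⟩, hWU⟩ := (nhds_basis_clopen (1 : G)).mem_iff.mp hU
  obtain ⟨M, hM⟩ :=
    IsTopologicalGroup.exist_openNormalSubgroup_sub_clopen_nhds_of_one hW h1W
  set g : ℕ → Subgroup G := fun i => (fun K => K.comap T)^[i] M.toSubgroup with hg
  have hgsucc : ∀ i, g (i + 1) = (g i).comap T := fun i =>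
    Function.iterate_succ_apply' _ i _
  set n := M.toSubgroup.index with hn
  have hprop : ∀ i, (g i).Normal ∧ IsOpen ((g i) : Set G) ∧ (g i).index = n := by
    intro i
    induction i with
    | zero => exact ⟨M.isNormal', M.isOpen', rfl⟩
    | succ k ih =>
      rw [hgsucc]
      refine ⟨Subgroup.Normal.comap ih.1 T, ?_, ?_⟩
      · exact ih.2.1.preimage hc
      · rw [Subgroup.index_comap_of_surjective _ hs]; exact ih.2.2
  refine ⟨⨅ i, g i, ?_, ?_, ?_, ?_⟩
  · refine ⟨fun x hx gc => ?_⟩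
    rw [Subgroup.mem_iInf] at hx ⊢
    exact fun i => (hprop i).1.conj_mem x (hx i) gc
  · have hrange : (Set.range fun i => ((g i : Subgroup G) : Set G)).Finite := by
      have : (Set.range fun i => ((g i : Subgroup G) : Set G)) ⊆
          (fun K : Subgroup G => (K : Set G)) ''
            {N : Subgroup G | N.Normal ∧ IsOpen (N : Set G) ∧ N.index = n} := by
        rintro s ⟨i, rfl⟩
        exact ⟨g i, hprop i, rfl⟩
      exact Set.Finite.subset ((hfin n).image _) this
    have hcoe : ((⨅ i, g i : Subgroup G) : Set G) = ⋂ i, ((g i : Subgroup G) : Set G) := by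
      simp [Subgroup.coe_iInf]
    rw [hcoe, ← Set.sInter_range]
    exact hrange.isOpen_sInter (by rintro t ⟨i, rfl⟩; exact (hprop i).2.1)
  · intro x hx
    have : x ∈ g 0 := by
      have := Subgroup.mem_iInf.mp hx
      exact this 0
    exact hWU (hM this)
  · rintro _ ⟨x, hx, rfl⟩
    rw [SetLike.mem_coe, Subgroup.mem_iInf] at hx ⊢
    intro i
    have := hx (i + 1)
    rw [hgsucc] at this
    exact this
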